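/- Let p_1,…,p_k be positive integers with k ≥ 2 and n = p_1 + ⋯ + p_k. Then B_{p_1} × B_{p_2} × ⋯ × B_{p_k} (as a subset of B_n via iterated shifted products) is the disjoint union over all tuples (L_2,…,L_k) with L_i ⊆ [p_i] of the components B_{p_1} × B_{p_2,L_2} × ⋯ × B_{p_k,L_k}; moreover B_n is the disjoint union, over all ξ ∈ Sh(p_1,…,p_k) and all tuples (L_2,…,L_k) with L_i ⊆ [p_i], of the sets (B_{p_1} × B_{p_2,L_2} × ⋯ × B_{p_k,L_k})·ξ⁻¹. -/

import Mathlib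

open Finset

open scoped Classical

/-- The hyperoctahedral group `𝔅ₙ`, realized as the set of those permutations `w` of `ℤ`
that satisfy `w (-i) = - w i` for all `i` and fix every integer of absolute value `> n`.
One-line notation: `w₁ ⋯ w_n` with `w_i = w i` for `1 ≤ i ≤ n`. -/
def SignedPerm (n : ℕ) : Set (Equiv.Perm ℤ) :=
  {w | (∀ i : ℤ, w (-i) = - w i) ∧ (∀ i : ℤ, (n : ℤ) < |i| → w i = i)}

/-- The inversion set `Inv(w) = {(i,j) : 1 ≤ i < j ≤ n, w_i > w_j}`. -/
noncomputable def InvSet (n : ℕ) (w : Equiv.Perm ℤ) : Finset (ℤ × ℤ) :=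
  ((Finset.Icc (1 : ℤ) (n : ℤ)) ×ˢ (Finset.Icc (1 : ℤ) (n : ℤ))).filter
    fun p => p.1 < p.2 ∧ w p.2 < w p.1

/-- The set of negative indices `Nega(w) = {i ∈ [n] : w_i < 0}`. -/
noncomputable def NegaSet (n : ℕ) (w : Equiv.Perm ℤ) : Finset ℤ :=
  (Finset.Icc (1 : ℤ) (n : ℤ)).filter fun i => w i < 0

/-- The negative sum pair set `Nsp(w) = {(i,j) : 1 ≤ i < j ≤ n, w_i + w_j < 0}`. -/
noncomputable def NspSet (n : ℕ) (w : Equiv.Perm ℤ) : Finset (ℤ × ℤ) :=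
  ((Finset.Icc (1 : ℤ) (n : ℤ)) ×ˢ (Finset.Icc (1 : ℤ) (n : ℤ))).filter
    fun p => p.1 < p.2 ∧ w p.1 + w p.2 < 0

/-- The Coxeter length of `w ∈ 𝔅ₙ`: `ℓ(w) = #Inv(w) + #Nega(w) + #Nsp(w)`. -/
noncomputable def blen (n : ℕ) (w : Equiv.Perm ℤ) : ℕ :=
  (InvSet n w).card + (NegaSet n w).card + (NspSet n w).card

/-- The left weak order on `𝔅ₙ`: `u ≤ v` iff `ℓ(v) = ℓ(u) + ℓ(v * u⁻¹)`. -/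
def wle (n : ℕ) (u v : Equiv.Perm ℤ) : Prop :=
  blen n v = blen n u + blen n (v * u⁻¹)

/-- The Coxeter generators of `𝔅ₙ`: `s₀ = (1,-1)` and `sᵢ = (i,i+1)(-i,-(i+1))` for `i ≥ 1`. -/
def sB (i : ℕ) : Equiv.Perm ℤ :=
  if i = 0 then Equiv.swap 1 (-1)
  else Equiv.swap (i : ℤ) ((i : ℤ) + 1) * Equiv.swap (-(i : ℤ)) (-((i : ℤ) + 1))

/-- `a[p] = a + p` if `a > 0`, `a - p` if `a < 0` (and `0 ↦ 0`). -/
def shiftFun (p : ℕ) (b : ℤ) : ℤ :=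
  if 0 < b then b + (p : ℤ) else if b < 0 then b - (p : ℤ) else 0

/-- `w` is the shifted product `u × v ∈ 𝔅_{p+q}` of `u ∈ 𝔅_p` and `v ∈ 𝔅_q`:
its one-line notation is `(u₁, …, u_p, v₁[p], …, v_q[p])`. -/
def IsSProd (p q : ℕ) (u v w : Equiv.Perm ℤ) : Prop :=
  w ∈ SignedPerm (p + q) ∧
  (∀ a : ℤ, 1 ≤ a → a ≤ (p : ℤ) → w a = u a) ∧
  (∀ a : ℤ, (p : ℤ) < a → a ≤ (p : ℤ) + (q : ℤ) → w a = shiftFun p (v (a - (p : ℤ))))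

/-- `ξ` is a `(p,q)`-shuffle: an element of `𝔅_{p+q}` with positive entries (a permutation)
that is increasing on each of the blocks `[1,p]` and `[p+1,p+q]`. -/
def IsShuffle (p q : ℕ) (ξ : Equiv.Perm ℤ) : Prop :=
  ξ ∈ SignedPerm (p + q) ∧
  (∀ a : ℤ, 1 ≤ a → a ≤ (p : ℤ) + (q : ℤ) → 0 < ξ a) ∧
  (∀ a b : ℤ, 1 ≤ a → a < b → b ≤ (p : ℤ) → ξ a < ξ b) ∧
  (∀ a b : ℤ, (p : ℤ) < a → a < b → b ≤ (p : ℤ) + (q : ℤ) → ξ a < ξ b)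

/-- `w` is the standard signed permutation `sts(a₁ ⋯ a_m)` of the word `a₁ ⋯ a_m = a 1, …, a m`
(of nonzero integers): the unique `w ∈ 𝔅_m` with the same negative index set and
`|w_i| < |w_j| ↔ |a_i| ≤ |a_j|` for `1 ≤ i < j ≤ m`. -/
def IsSts (m : ℕ) (a : ℤ → ℤ) (w : Equiv.Perm ℤ) : Prop :=
  w ∈ SignedPerm m ∧
  (∀ i : ℤ, 1 ≤ i → i ≤ (m : ℤ) → (w i < 0 ↔ a i < 0)) ∧
  (∀ i j : ℤ, 1 ≤ i → i < j → j ≤ (m : ℤ) → (|w i| < |w j| ↔ |a i| ≤ |a j|))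

/-- The standard signed permutation of a word, as a function. -/
noncomputable def sts (m : ℕ) (a : ℤ → ℤ) : Equiv.Perm ℤ :=
  if h : ∃ w, IsSts m a w then h.choose else 1

/-- Descent set of `w ∈ 𝔅ₙ`: `Des(w) = {i ∈ [0,n-1] : w_i > w_{i+1}}` with `w₀ = 0`
(note `w 0 = 0` holds automatically). -/
def DesSet (n : ℕ) (w : Equiv.Perm ℤ) : Finset ℕ :=
  (Finset.range n).filter fun i => w ((i : ℤ) + 1) < w (i : ℤ)

/-- Global descent set of `u ∈ 𝔅ₙ`. -/
noncomputable def GDesSet (n : ℕ) (u : Equiv.Perm ℤ) : Finset ℕ :=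
  (Finset.Ico 1 n).filter fun i =>
    ∀ j k : ℤ, 1 ≤ j → j ≤ (i : ℤ) → (i : ℤ) < k → k ≤ (n : ℤ) → u k < u j

/-- `m` is the meet (greatest lower bound) of `x` and `y` within `S`, w.r.t. the weak order. -/
def IsMeetIn (n : ℕ) (S : Set (Equiv.Perm ℤ)) (x y m : Equiv.Perm ℤ) : Prop :=
  m ∈ S ∧ wle n m x ∧ wle n m y ∧ ∀ z ∈ S, wle n z x → wle n z y → wle n z m

/-- `j` is the join (least upper bound) of `x` and `y` within `S`, w.r.t. the weak order. -/
def IsJoinIn (n : ℕ) (S : Set (Equiv.Perm ℤ)) (x y j : Equiv.Perm ℤ) : Prop :=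
  j ∈ S ∧ wle n x j ∧ wle n y j ∧ ∀ z ∈ S, wle n x z → wle n y z → wle n j z

/-- The set `𝔅_p × 𝔅_{q,K} ⊆ 𝔅_{p+q}` of shifted products `u × v` with `u ∈ 𝔅_p`,
`v ∈ 𝔅_q`, `Nega(v) = K`. -/
def SProdComp (p q : ℕ) (K : Finset ℤ) : Set (Equiv.Perm ℤ) :=
  {w | ∃ u v : Equiv.Perm ℤ, u ∈ SignedPerm p ∧ v ∈ SignedPerm q ∧ NegaSet q v = K ∧
        IsSProd p q u v w}

/-- `w` is the iterated shifted product `u⁽¹⁾ × ⋯ × u⁽ᵏ⁾` of the list `us` of signed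
permutations with block sizes given by the list `ps`. -/
def IsMultiSProd (ps : List ℕ) (us : List (Equiv.Perm ℤ)) (w : Equiv.Perm ℤ) : Prop :=
  w ∈ SignedPerm ps.sum ∧ us.length = ps.length ∧
  ∀ i < ps.length,
    us.getD i 1 ∈ SignedPerm (ps.getD i 0) ∧
    ∀ a : ℤ, ((ps.take i).sum : ℤ) < a → a ≤ ((ps.take i).sum : ℤ) + (ps.getD i 0 : ℤ) →
      w a = shiftFun ((ps.take i).sum) ((us.getD i 1) (a - ((ps.take i).sum : ℤ)))

/-- The subset `𝔅_{p₁} × 𝔅_{p₂} × ⋯ × 𝔅_{p_k}` of `𝔅_{p₁+⋯+p_k}`. -/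
def MultiProdSet (ps : List ℕ) : Set (Equiv.Perm ℤ) :=
  {w | ∃ us, IsMultiSProd ps us w}

/-- The `(L₂,…,L_k)`-component `𝔅_{p₁} × 𝔅_{p₂,L₂} × ⋯ × 𝔅_{p_k,L_k}`, where
`Ls.getD (i-1) ∅` is the prescribed negative index set of the `(i+1)`-st factor. -/
def ComponentSet (ps : List ℕ) (Ls : List (Finset ℤ)) : Set (Equiv.Perm ℤ) :=
  {w | ∃ us, IsMultiSProd ps us w ∧
        ∀ i, 1 ≤ i → i < ps.length →
          NegaSet (ps.getD i 0) (us.getD i 1) = Ls.getD (i - 1) ∅}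

/-- `ξ ∈ Sh(p₁,…,p_k)`: a permutation in `𝔅_{p₁+⋯+p_k}` (all entries positive)
increasing on each consecutive block. -/
def IsMultiShuffle (ps : List ℕ) (ξ : Equiv.Perm ℤ) : Prop :=
  ξ ∈ SignedPerm ps.sum ∧
  (∀ a : ℤ, 1 ≤ a → a ≤ (ps.sum : ℤ) → 0 < ξ a) ∧
  ∀ i < ps.length, ∀ a b : ℤ,
    ((ps.take i).sum : ℤ) < a → a < b → b ≤ ((ps.take i).sum : ℤ) + (ps.getD i 0 : ℤ) →
      ξ a < ξ b

/-- A valid tuple `(L₂,…,L_k)` of prescribed negative index sets: `L_i ⊆ [p_i]`. -/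
def ValidLs (ps : List ℕ) (Ls : List (Finset ℤ)) : Prop :=
  Ls.length = ps.length - 1 ∧
  ∀ i < ps.length - 1, Ls.getD i ∅ ⊆ Finset.Icc (1 : ℤ) (ps.getD (i + 1) 0 : ℤ)


namespace SP
variable {n : ℕ} {w : Equiv.Perm ℤ}

lemma map_zero (h : w ∈ SignedPerm n) : w 0 = 0 := by
  have := h.1 0; simp at this; linarith

lemma apply_ne_zero (h : w ∈ SignedPerm n) {a : ℤ} (ha : a ≠ 0) : w a ≠ 0 := by
  intro hz
  exact ha (w.injective (by rw [hz, map_zero h]))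

lemma abs_le (h : w ∈ SignedPerm n) {a : ℤ} (ha : |a| ≤ n) : |w a| ≤ n := by
  by_contra hlt
  push_neg at hlt
  have h1 : w (w a) = w a := h.2 _ hlt
  have h2 : w a = a := w.injective h1
  rw [h2] at hlt; omega

lemma abs_inj (h : w ∈ SignedPerm n) {a b : ℤ} (hab : |w a| = |w b|) : |a| = |b| := by
  rcases abs_eq_abs.mp hab with h1 | h1
  · have := w.injective h1; rw [this]
  · have : w a = w (-b) := by rw [h.1]; exact h1
    have := w.injective this; rw [this, abs_neg]

lemma mul_mem {u : Equiv.Perm ℤ} (hw : w ∈ SignedPerm n) (hu : u ∈ SignedPerm n) :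
    w * u ∈ SignedPerm n := by
  constructor
  · intro i; simp [Equiv.Perm.mul_apply, hu.1, hw.1]
  · intro i hi; simp [Equiv.Perm.mul_apply, hu.2 i hi, hw.2 i hi]

lemma inv_mem (hw : w ∈ SignedPerm n) : w⁻¹ ∈ SignedPerm n := by
  constructor
  · intro i
    apply w.injective
    rw [Equiv.Perm.coe_inv, Equiv.apply_symm_apply, hw.1, Equiv.apply_symm_apply]
  · intro i hi
    apply w.injective
    rw [Equiv.Perm.coe_inv, Equiv.apply_symm_apply, hw.2 i hi]

lemma abs_pos_of (h : w ∈ SignedPerm n) {a : ℤ} (h1 : 1 ≤ a) (h2 : a ≤ (n:ℤ)) :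
    1 ≤ |w a| ∧ |w a| ≤ (n:ℤ) := by
  constructor
  · have := apply_ne_zero h (a := a) (by omega)
    exact Int.one_le_abs this
  · exact abs_le h (by rw [abs_of_pos (by omega : (0:ℤ) < a)]; omega)

end SP

namespace SP

/-- Extend a map defined on `[1,n]` with values of absolute value in `[1,n]`,
injective in absolute value, to a signed permutation. -/
lemma exists_signedExtend (n : ℕ) (f : ℤ → ℤ)
    (h1 : ∀ a : ℤ, 1 ≤ a → a ≤ (n:ℤ) → 1 ≤ |f a| ∧ |f a| ≤ (n:ℤ))
    (h2 : ∀ a b : ℤ, 1 ≤ a → a ≤ (n:ℤ) → 1 ≤ b → b ≤ (n:ℤ) → |f a| = |f b| → a = b) :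
    ∃ w : Equiv.Perm ℤ, w ∈ SignedPerm n ∧ ∀ a : ℤ, 1 ≤ a → a ≤ (n:ℤ) → w a = f a := by
  set F : ℤ → ℤ := fun a =>
    if 1 ≤ a ∧ a ≤ (n:ℤ) then f a else if 1 ≤ -a ∧ -a ≤ (n:ℤ) then -f (-a) else a with hF
  have hpos : ∀ a : ℤ, 1 ≤ a → a ≤ (n:ℤ) → F a = f a := by
    intro a ha1 ha2; simp only [hF]; rw [if_pos ⟨ha1, ha2⟩]
  have hneg : ∀ a : ℤ, 1 ≤ -a → -a ≤ (n:ℤ) → F a = -f (-a) := by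
    intro a ha1 ha2; simp only [hF]; rw [if_neg (by omega), if_pos ⟨ha1, ha2⟩]
  have hout : ∀ a : ℤ, ¬ (1 ≤ |a| ∧ |a| ≤ (n:ℤ)) → F a = a := by
    intro a ha; simp only [hF]
    rw [if_neg (by rcases abs_cases a with ⟨h,_⟩|⟨h,_⟩ <;> omega),
        if_neg (by rcases abs_cases a with ⟨h,_⟩|⟨h,_⟩ <;> omega)]
  have hT : ∀ a : ℤ, 1 ≤ |a| → |a| ≤ (n:ℤ) → 1 ≤ |F a| ∧ |F a| ≤ (n:ℤ) := by
    intro a ha1 ha2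
    rcases le_or_gt 1 a with h | h
    · rw [abs_of_pos (by omega)] at ha2
      rw [hpos a h ha2]; exact h1 a h ha2
    · have h1a : 1 ≤ -a := by rcases abs_cases a with ⟨h',_⟩|⟨h',_⟩ <;> omega
      have h2a : -a ≤ (n:ℤ) := by rw [abs_of_neg (by omega)] at ha2; omega
      rw [hneg a h1a h2a, abs_neg]; exact h1 (-a) h1a h2a
  have hinjT : ∀ a b : ℤ, 1 ≤ |a| → |a| ≤ (n:ℤ) → 1 ≤ |b| → |b| ≤ (n:ℤ) →
      F a = F b → a = b := by
    intro a b ha1 ha2 hb1 hb2 hab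
    rcases le_or_gt 1 a with ha | ha <;> rcases le_or_gt 1 b with hb | hb
    · rw [abs_of_pos (by omega)] at ha2; rw [abs_of_pos (by omega)] at hb2
      rw [hpos a ha ha2, hpos b hb hb2] at hab
      exact h2 a b ha ha2 hb hb2 (by rw [hab])
    · rw [abs_of_pos (by omega)] at ha2
      have hb1' : 1 ≤ -b := by rcases abs_cases b with ⟨h',_⟩|⟨h',_⟩ <;> omega
      have hb2' : -b ≤ (n:ℤ) := by rw [abs_of_neg (by omega)] at hb2; omega
      rw [hpos a ha ha2, hneg b hb1' hb2'] at hab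
      have heq : a = -b := h2 a (-b) ha ha2 hb1' hb2' (by rw [hab, abs_neg])
      exfalso
      rw [heq] at hab
      have hz : f (-b) = 0 := by omega
      have := (h1 (-b) hb1' hb2').1
      rw [hz] at this; simp at this
    · rw [abs_of_pos (by omega)] at hb2
      have ha1' : 1 ≤ -a := by rcases abs_cases a with ⟨h',_⟩|⟨h',_⟩ <;> omega
      have ha2' : -a ≤ (n:ℤ) := by rw [abs_of_neg (by omega)] at ha2; omega
      rw [hneg a ha1' ha2', hpos b hb hb2] at hab
      have heq : -a = b := h2 (-a) b ha1' ha2' hb hb2 (by rw [← hab, abs_neg])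
      exfalso
      rw [heq] at hab
      have hz : f b = 0 := by omega
      have := (h1 b hb hb2).1
      rw [hz] at this; simp at this
    · have ha1' : 1 ≤ -a := by rcases abs_cases a with ⟨h',_⟩|⟨h',_⟩ <;> omega
      have ha2' : -a ≤ (n:ℤ) := by rw [abs_of_neg (by omega)] at ha2; omega
      have hb1' : 1 ≤ -b := by rcases abs_cases b with ⟨h',_⟩|⟨h',_⟩ <;> omega
      have hb2' : -b ≤ (n:ℤ) := by rw [abs_of_neg (by omega)] at hb2; omega
      rw [hneg a ha1' ha2', hneg b hb1' hb2'] at hab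
      have := h2 (-a) (-b) ha1' ha2' hb1' hb2' (by rw [neg_inj.mp hab])
      omega
  have hinj : Function.Injective F := by
    intro a b hab
    by_cases hTa : 1 ≤ |a| ∧ |a| ≤ (n:ℤ) <;> by_cases hTb : 1 ≤ |b| ∧ |b| ≤ (n:ℤ)
    · exact hinjT a b hTa.1 hTa.2 hTb.1 hTb.2 hab
    · exfalso; rw [hout b hTb] at hab
      have := hT a hTa.1 hTa.2; rw [hab] at this; exact hTb this
    · exfalso; rw [hout a hTa] at hab
      have := hT b hTb.1 hTb.2; rw [← hab] at this; exact hTa this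
    · rwa [hout a hTa, hout b hTb] at hab
  have hsurj : Function.Surjective F := by
    intro y
    by_cases hTy : 1 ≤ |y| ∧ |y| ≤ (n:ℤ)
    · set Ts : Finset ℤ := (Finset.Icc (-(n:ℤ)) (n:ℤ)).filter (fun a => 1 ≤ |a|) with hTs
      have hmemT : ∀ a : ℤ, a ∈ Ts ↔ (1 ≤ |a| ∧ |a| ≤ (n:ℤ)) := by
        intro a
        simp only [hTs, Finset.mem_filter, Finset.mem_Icc]
        constructor
        · rintro ⟨⟨u,v⟩,h⟩; exact ⟨h, by rcases abs_cases a with ⟨h',_⟩|⟨h',_⟩ <;> omega⟩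
        · rintro ⟨u,v⟩; exact ⟨by rcases abs_cases a with ⟨h',_⟩|⟨h',_⟩ <;> omega, u⟩
      have := Finset.surj_on_of_inj_on_of_card_le (s := Ts) (t := Ts) (f := fun a _ => F a)
        (fun a ha => by
          rw [hmemT] at ha ⊢; exact hT a ha.1 ha.2)
        (fun a b ha hb hab => hinj hab) le_rfl y ((hmemT y).mpr hTy)
      obtain ⟨a, _, ha⟩ := this
      exact ⟨a, ha.symm⟩
    · exact ⟨y, hout y hTy⟩
  refine ⟨Equiv.ofBijective F ⟨hinj, hsurj⟩, ⟨?_, ?_⟩, ?_⟩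
  · intro i
    show F (-i) = - F i
    by_cases hp : 1 ≤ i ∧ i ≤ (n:ℤ)
    · rw [hpos i hp.1 hp.2, hneg (-i) (by omega) (by omega), neg_neg]
    · by_cases hq : 1 ≤ -i ∧ -i ≤ (n:ℤ)
      · rw [hneg i hq.1 hq.2, hpos (-i) hq.1 hq.2, neg_neg]
      · rw [hout i (by rcases abs_cases i with ⟨h',_⟩|⟨h',_⟩ <;> omega),
            hout (-i) (by rcases abs_cases (-i) with ⟨h',_⟩|⟨h',_⟩ <;> omega)]
  · intro i hi
    show F i = i
    exact hout i (by omega)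
  · intro a ha1 ha2
    show F a = f a
    exact hpos a ha1 ha2
end SP

namespace SP

lemma sum_take_succ (ps : List ℕ) (i : ℕ) (h : i < ps.length) :
    (ps.take (i+1)).sum = (ps.take i).sum + ps.getD i 0 := by
  rw [List.sum_take_succ ps i h, List.getD_eq_getElem ps 0 h]

lemma take_sum_mono (ps : List ℕ) {i j : ℕ} (h : i ≤ j) :
    (ps.take i).sum ≤ (ps.take j).sum := by
  have : ps.take i = (ps.take j).take i := by rw [List.take_take, Nat.min_eq_left h]
  rw [this]
  conv_rhs => rw [← List.take_append_drop i (ps.take j)]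
  rw [List.sum_append]
  omega

lemma take_sum_le (ps : List ℕ) (i : ℕ) : (ps.take i).sum ≤ ps.sum := by
  conv_rhs => rw [← List.take_append_drop i ps]
  rw [List.sum_append]; omega

lemma take_len_sum (ps : List ℕ) : (ps.take ps.length).sum = ps.sum := by
  rw [List.take_length]

lemma block_exists (ps : List ℕ) (a : ℤ) (h1 : 1 ≤ a) (h2 : a ≤ (ps.sum : ℤ)) :
    ∃ i < ps.length, ((ps.take i).sum : ℤ) < a ∧
      a ≤ ((ps.take i).sum : ℤ) + (ps.getD i 0 : ℤ) := by
  induction ps generalizing a with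
  | nil => simp at h2; omega
  | cons p ps ih =>
    by_cases hp : a ≤ (p : ℤ)
    · exact ⟨0, by simp, by simp; omega, by simpa using hp⟩
    · push_neg at hp
      obtain ⟨i, hi, hl, hr⟩ := ih (a - p) (by omega) (by simp at h2 ⊢; omega)
      refine ⟨i + 1, by simpa using hi, ?_, ?_⟩
      · simp only [List.take_succ_cons, List.sum_cons, List.getD_cons_succ] at *
        omega
      · simp only [List.take_succ_cons, List.sum_cons, List.getD_cons_succ] at *
        omega

lemma block_unique (ps : List ℕ) {a : ℤ} {i j : ℕ} (hi : i < ps.length) (hj : j < ps.length)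
    (h1 : ((ps.take i).sum : ℤ) < a) (h2 : a ≤ ((ps.take i).sum : ℤ) + (ps.getD i 0 : ℤ))
    (h3 : ((ps.take j).sum : ℤ) < a) (h4 : a ≤ ((ps.take j).sum : ℤ) + (ps.getD j 0 : ℤ)) :
    i = j := by
  by_contra hne
  rcases Nat.lt_or_ge i j with h | h
  · have e1 := sum_take_succ ps i hi
    have e2 := take_sum_mono ps (show i + 1 ≤ j by omega)
    omega
  · have hlt : j < i := by omega
    have e1 := sum_take_succ ps j hj
    have e2 := take_sum_mono ps (show j + 1 ≤ i by omega)
    omega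

end SP

namespace SP

lemma card_filter_abs {n : ℕ} {w : Equiv.Perm ℤ} (hw : w ∈ SignedPerm n) (s t : ℤ)
    (hs : 0 ≤ s) (htn : t ≤ (n:ℤ)) :
    (((Finset.Icc (1:ℤ) (n:ℤ))).filter (fun j => s < |w j| ∧ |w j| ≤ t)).card
      = (t - s).toNat := by
  rw [← Int.card_Ioc s t]
  apply Finset.card_bij (fun j _ => |w j|)
  · intro j hj
    simp only [Finset.mem_filter] at hj
    simp only [Finset.mem_Ioc]
    exact hj.2
  · intro j hj j' hj' hjj
    simp only [Finset.mem_filter, Finset.mem_Icc] at hj hj'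
    have := abs_inj hw hjj
    rw [abs_of_pos (by omega), abs_of_pos (by omega)] at this
    exact this
  · intro m hm
    simp only [Finset.mem_Ioc] at hm
    have hinv := inv_mem hw
    have hm0 : m ≠ 0 := by omega
    have habs : |m| ≤ (n:ℤ) := by rw [abs_of_pos (by omega)]; omega
    have h1 : |w⁻¹ m| ≤ (n:ℤ) := abs_le hinv habs
    have h2 : w⁻¹ m ≠ 0 := apply_ne_zero hinv hm0
    have h3 : 1 ≤ |w⁻¹ m| := Int.one_le_abs h2
    refine ⟨|w⁻¹ m|, ?_, ?_⟩
    · have habsw : |w (|w⁻¹ m|)| = m := by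
        rcases abs_cases (w⁻¹ m) with ⟨he, _⟩ | ⟨he, _⟩
        · rw [he, Equiv.Perm.coe_inv, Equiv.apply_symm_apply, abs_of_pos (by omega)]
        · rw [he, hw.1, Equiv.Perm.coe_inv, Equiv.apply_symm_apply, abs_neg, abs_of_pos (by omega)]
      simp only [Finset.mem_filter, Finset.mem_Icc]
      refine ⟨⟨by omega, by omega⟩, by rw [habsw]; omega, by rw [habsw]; omega⟩
    · rcases abs_cases (w⁻¹ m) with ⟨he, _⟩ | ⟨he, _⟩
      · rw [he, Equiv.Perm.coe_inv, Equiv.apply_symm_apply, abs_of_pos (by omega)]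
      · rw [he, hw.1, Equiv.Perm.coe_inv, Equiv.apply_symm_apply, abs_neg, abs_of_pos (by omega)]

end SP

namespace SP

lemma abs_shiftFun (p : ℕ) (b : ℤ) (hb : b ≠ 0) : |shiftFun p b| = |b| + p := by
  unfold shiftFun
  rcases lt_or_gt_of_ne hb with h | h
  · rw [if_neg (by omega), if_pos h, abs_of_neg (by omega), abs_of_neg h]; ring
  · rw [if_pos h, abs_of_pos (by omega), abs_of_pos h]

lemma shiftFun_neg_iff (p : ℕ) (b : ℤ) (hb : b ≠ 0) : shiftFun p b < 0 ↔ b < 0 := by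
  unfold shiftFun
  rcases lt_or_gt_of_ne hb with h | h
  · rw [if_neg (by omega), if_pos h]; omega
  · rw [if_pos h]; omega

/-- main decomposition: every signed permutation is a shifted multi-product times
the inverse of a multi-shuffle. -/
lemma exists_decomp (ps : List ℕ) (hpos : ∀ x ∈ ps, 0 < x) {w : Equiv.Perm ℤ}
    (hw : w ∈ SignedPerm ps.sum) :
    ∃ ξ : Equiv.Perm ℤ,
      (ξ ∈ SignedPerm ps.sum ∧
       (∀ a : ℤ, 1 ≤ a → a ≤ (ps.sum : ℤ) → 0 < ξ a) ∧
       ∀ i < ps.length, ∀ a b : ℤ,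
         ((ps.take i).sum : ℤ) < a → a < b →
           b ≤ ((ps.take i).sum : ℤ) + (ps.getD i 0 : ℤ) → ξ a < ξ b) ∧
      ∃ us : List (Equiv.Perm ℤ),
        (w * ξ ∈ SignedPerm ps.sum ∧ us.length = ps.length ∧
        ∀ i < ps.length,
          us.getD i 1 ∈ SignedPerm (ps.getD i 0) ∧
          ∀ a : ℤ, ((ps.take i).sum : ℤ) < a →
            a ≤ ((ps.take i).sum : ℤ) + (ps.getD i 0 : ℤ) →
            (w * ξ) a = shiftFun ((ps.take i).sum) ((us.getD i 1) (a - ((ps.take i).sum : ℤ)))) := by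
  classical
  set n := ps.sum with hn
  set k := ps.length with hk
  set S : ℕ → ℤ := fun i => ((ps.take i).sum : ℤ) with hS
  set P : ℕ → ℤ := fun i => (ps.getD i 0 : ℤ) with hP
  have hSmono : ∀ {i j : ℕ}, i ≤ j → S i ≤ S j := fun h => by
    simpa [hS] using Nat.cast_le.mpr (take_sum_mono ps h)
  have hS0 : ∀ i, 0 ≤ S i := fun i => by positivity
  have hSsucc : ∀ i < k, S (i+1) = S i + P i := by
    intro i hi
    simp only [hS, hP]
    rw [← Nat.cast_add, Nat.cast_inj]
    exact sum_take_succ ps i hi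
  have hSn : ∀ i, S i ≤ (n:ℤ) := fun i => by
    simpa [hS, hn] using Nat.cast_le.mpr (take_sum_le ps i)
  have hStop : ∀ i < k, S i + P i ≤ (n:ℤ) := by
    intro i hi
    rw [← hSsucc i hi]
    exact hSn (i+1)
  -- the blocks of values
  set A : ℕ → Finset ℤ := fun i =>
    (Finset.Icc (1:ℤ) (n:ℤ)).filter (fun j => S i < |w j| ∧ |w j| ≤ S i + P i) with hA
  have hcard : ∀ i < k, (A i).card = ps.getD i 0 := by
    intro i hi
    rw [hA]
    rw [card_filter_abs hw (S i) (S i + P i) (hS0 i) (hStop i hi)]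
    simp [hP]
  have hmemA : ∀ i x, x ∈ A i ↔ (1 ≤ x ∧ x ≤ (n:ℤ) ∧ S i < |w x| ∧ |w x| ≤ S i + P i) := by
    intro i x
    simp only [hA, Finset.mem_filter, Finset.mem_Icc]
    tauto
  have hAdisj : ∀ i j x, i < k → j < k → i ≠ j → x ∈ A i → x ∈ A j → False := by
    intro i j x hi hj hij hxi hxj
    rw [hmemA] at hxi hxj
    rcases Nat.lt_or_ge i j with h | h
    · have e1 := hSsucc i hi
      have e2 := hSmono (show i + 1 ≤ j by omega)
      omega
    · have hji : j < i := by omega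
      have e1 := hSsucc j hj
      have e2 := hSmono (show j + 1 ≤ i by omega)
      omega
  -- sorted lists
  set L : ℕ → List ℤ := fun i => (A i).sort (· ≤ ·) with hL
  have hlen : ∀ i < k, (L i).length = ps.getD i 0 := by
    intro i hi; rw [hL]; rw [Finset.length_sort]; exact hcard i hi
  have hmemL : ∀ i x, x ∈ L i ↔ x ∈ A i := fun i x => Finset.mem_sort _
  have hsorted : ∀ i, List.Pairwise (· < ·) (L i) := fun i => (Finset.sortedLT_sort (A i)).pairwise
  -- block index
  set bIdx : ℤ → ℕ := fun a =>
    ((Finset.range k).filter (fun j => S (j+1) < a)).card with hbIdx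
  have hbIdx_eq : ∀ (i : ℕ) (a : ℤ), i < k → S i < a → a ≤ S i + P i → bIdx a = i := by
    intro i a hi h1 h2
    have : (Finset.range k).filter (fun j => S (j+1) < a) = Finset.range i := by
      ext j
      simp only [Finset.mem_filter, Finset.mem_range]
      constructor
      · rintro ⟨hj, hpj⟩
        by_contra hc
        push_neg at hc
        have := hSmono (show i + 1 ≤ j + 1 by omega)
        have := hSsucc i hi
        omega
      · intro hj
        have h3 := hSmono (show j + 1 ≤ i by omega)
        exact ⟨by omega, by omega⟩
    show ((Finset.range k).filter (fun j => S (j+1) < a)).card = i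
    rw [this, Finset.card_range]
  -- the sorting permutation function
  set f : ℤ → ℤ := fun a => (L (bIdx a)).getD (a - S (bIdx a) - 1).toNat 0 with hf
  have hfblock : ∀ (i : ℕ) (a : ℤ), i < k → S i < a → a ≤ S i + P i →
      ∃ (hidx : (a - S i - 1).toNat < (L i).length),
        f a = (L i)[(a - S i - 1).toNat] ∧ f a ∈ A i := by
    intro i a hi h1 h2
    have hbi : bIdx a = i := hbIdx_eq i a hi h1 h2
    have hidx : (a - S i - 1).toNat < (L i).length := by
      rw [hlen i hi]
      have : (S i + P i - S i : ℤ) = P i := by ring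
      simp only [hP] at h2 ⊢
      omega
    refine ⟨hidx, ?_, ?_⟩
    · show (L (bIdx a)).getD (a - S (bIdx a) - 1).toNat 0 = _
      rw [hbi]
      exact List.getD_eq_getElem _ _ hidx
    · have hfa : f a ∈ L i := by
        show (L (bIdx a)).getD (a - S (bIdx a) - 1).toNat 0 ∈ L i
        rw [hbi, List.getD_eq_getElem _ _ hidx]
        exact List.getElem_mem hidx
      rw [← hmemL]; exact hfa
  have hfmono : ∀ (i : ℕ) (a b : ℤ), i < k → S i < a → a < b → b ≤ S i + P i →
      f a < f b := by
    intro i a b hi h1 h2 h3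
    obtain ⟨hia, hfa, _⟩ := hfblock i a hi h1 (by omega)
    obtain ⟨hib, hfb, _⟩ := hfblock i b hi (by omega) h3
    rw [hfa, hfb]
    exact (List.pairwise_iff_getElem.mp (hsorted i)) _ _ hia hib (by omega)
  -- properties of f on [1,n]
  have hf1 : ∀ a : ℤ, 1 ≤ a → a ≤ (n:ℤ) → 1 ≤ |f a| ∧ |f a| ≤ (n:ℤ) := by
    intro a ha1 ha2
    obtain ⟨i, hik, hl, hr⟩ := block_exists ps a ha1 ha2
    obtain ⟨_, _, hmem⟩ := hfblock i a hik hl hr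
    rw [hmemA] at hmem
    rw [abs_of_pos (by omega)]
    exact ⟨hmem.1, hmem.2.1⟩
  have hfpos : ∀ a : ℤ, 1 ≤ a → a ≤ (n:ℤ) → 0 < f a := by
    intro a ha1 ha2
    obtain ⟨i, hik, hl, hr⟩ := block_exists ps a ha1 ha2
    obtain ⟨_, _, hmem⟩ := hfblock i a hik hl hr
    rw [hmemA] at hmem
    omega
  have hf2 : ∀ a b : ℤ, 1 ≤ a → a ≤ (n:ℤ) → 1 ≤ b → b ≤ (n:ℤ) → |f a| = |f b| → a = b := by
    intro a b ha1 ha2 hb1 hb2 hab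
    have hfab : f a = f b := by
      have := hfpos a ha1 ha2
      have := hfpos b hb1 hb2
      rw [abs_of_pos (by omega), abs_of_pos (by omega)] at hab
      exact hab
    obtain ⟨i, hik, hil, hir⟩ := block_exists ps a ha1 ha2
    obtain ⟨j, hjk, hjl, hjr⟩ := block_exists ps b hb1 hb2
    obtain ⟨hia, hfa, hma⟩ := hfblock i a hik hil hir
    obtain ⟨hib, hfb, hmb⟩ := hfblock j b hjk hjl hjr
    have hij : i = j := by
      by_contra hne
      exact hAdisj i j (f a) hik hjk hne hma (hfab ▸ hmb)
    subst hij
    -- same block: use strict monotonicity / nodup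
    rcases lt_trichotomy a b with h | h | h
    · exact absurd hfab (by have := hfmono i a b hik hil h hjr; omega)
    · exact h
    · exact absurd hfab (by have := hfmono i b a hik hjl h hir; omega)
  obtain ⟨ξ, hξmem, hξeq⟩ := exists_signedExtend n f hf1 hf2
  have hξf : ∀ (i : ℕ) (a : ℤ), i < k → S i < a → a ≤ S i + P i → ξ a = f a := by
    intro i a hik hl hr
    exact hξeq a (by have := hS0 i; omega) (by have := hStop i hik; omega)
  refine ⟨ξ, ⟨hξmem, ?_, ?_⟩, ?_⟩
  · -- positivity
    intro a ha1 ha2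
    rw [hξeq a ha1 ha2]
    exact hfpos a ha1 ha2
  · -- blockwise increasing
    intro i hik a b hl hab hr
    have e : S i = ((ps.take i).sum : ℤ) := rfl
    have e2 : P i = (ps.getD i 0 : ℤ) := rfl
    rw [← e2] at hr
    rw [hξf i a hik hl (by omega), hξf i b hik (by omega) hr]
    exact hfmono i a b hik hl hab hr
  · -- the multi shifted product structure of w * ξ
    have hui : ∀ i, i < k → ∃ u : Equiv.Perm ℤ,
        u ∈ SignedPerm (ps.getD i 0) ∧
        ∀ a : ℤ, S i < a → a ≤ S i + P i →
          (w * ξ) a = shiftFun ((ps.take i).sum) (u (a - S i)) := by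
      intro i hik
      have hPi : P i = (ps.getD i 0 : ℤ) := rfl
      have hSieq : S i = (((ps.take i).sum : ℕ) : ℤ) := rfl
      have hS0i := hS0 i
      set g : ℤ → ℤ := fun b =>
        if 0 < w (f (b + S i)) then w (f (b + S i)) - S i else w (f (b + S i)) + S i with hg
      have hgval : ∀ b : ℤ, g b =
          if 0 < w (f (b + S i)) then w (f (b + S i)) - S i else w (f (b + S i)) + S i :=
        fun b => rfl
      have hx : ∀ b : ℤ, 1 ≤ b → b ≤ P i →
          S i < |w (f (b + S i))| ∧ |w (f (b + S i))| ≤ S i + P i := by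
        intro b hb1 hb2
        obtain ⟨_, _, hmem⟩ := hfblock i (b + S i) hik (by omega) (by omega)
        rw [hmemA] at hmem
        exact ⟨hmem.2.2.1, hmem.2.2.2⟩
      have hgabs : ∀ b : ℤ, S i < |w (f (b + S i))| → |g b| = |w (f (b + S i))| - S i := by
        intro b hb
        rw [hgval b]
        rcases lt_trichotomy (w (f (b + S i))) 0 with h | h | h
        · rw [if_neg (by omega)]
          have h2 : S i < -(w (f (b + S i))) := by rwa [abs_of_neg h] at hb
          rw [abs_of_neg (by omega), abs_of_neg h]
          ring
        · exfalso; rw [h] at hb; simp at hb; omega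
        · rw [if_pos h]
          have h2 : S i < w (f (b + S i)) := by rwa [abs_of_pos h] at hb
          rw [abs_of_pos (by omega), abs_of_pos h]
      have hg1 : ∀ b : ℤ, 1 ≤ b → b ≤ (ps.getD i 0 : ℤ) →
          1 ≤ |g b| ∧ |g b| ≤ (ps.getD i 0 : ℤ) := by
        intro b hb1 hb2
        obtain ⟨hx1, hx2⟩ := hx b hb1 (by rw [hPi]; exact hb2)
        rw [hgabs b hx1, ← hPi]
        omega
      have hg2 : ∀ b b' : ℤ, 1 ≤ b → b ≤ (ps.getD i 0 : ℤ) → 1 ≤ b' → b' ≤ (ps.getD i 0 : ℤ) →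
          |g b| = |g b'| → b = b' := by
        intro b b' hb1 hb2 hb1' hb2' heq
        rw [← hPi] at hb2 hb2'
        obtain ⟨hx1, hx2⟩ := hx b hb1 hb2
        obtain ⟨hx1', hx2'⟩ := hx b' hb1' hb2'
        rw [hgabs b hx1, hgabs b' hx1'] at heq
        have habsw : |w (f (b + S i))| = |w (f (b' + S i))| := by omega
        have habsf : |f (b + S i)| = |f (b' + S i)| := abs_inj hw habsw
        have hStopi := hStop i hik
        have := hf2 (b + S i) (b' + S i) (by omega) (by omega) (by omega) (by omega) habsf
        omega
      obtain ⟨u, humem, hueq⟩ := exists_signedExtend (ps.getD i 0) g hg1 hg2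
      refine ⟨u, humem, ?_⟩
      intro a hl hr
      have hb1 : 1 ≤ a - S i := by omega
      have hb2 : a - S i ≤ (ps.getD i 0 : ℤ) := by rw [← hPi]; omega
      rw [hueq (a - S i) hb1 hb2, hgval (a - S i)]
      have hba : a - S i + S i = a := by ring
      rw [hba]
      obtain ⟨hx1, hx2⟩ := hx (a - S i) hb1 (by omega)
      rw [hba] at hx1 hx2
      have hwa : (w * ξ) a = w (f a) := by
        rw [Equiv.Perm.mul_apply, hξf i a hik hl hr]
      rw [hwa]
      rcases lt_trichotomy (w (f a)) 0 with h | h | h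
      · have h2 : S i < -(w (f a)) := by rwa [abs_of_neg h] at hx1
        rw [if_neg (by omega)]
        unfold shiftFun
        rw [if_neg (by omega), if_pos (by omega), ← hSieq]
        ring
      · exfalso; rw [h] at hx1; simp at hx1; omega
      · have h2 : S i < w (f a) := by rwa [abs_of_pos h] at hx1
        rw [if_pos h]
        unfold shiftFun
        rw [if_pos (by omega), ← hSieq]
        ring
    set U : ℕ → Equiv.Perm ℤ := fun i => if h : i < k then (hui i h).choose else 1 with hU
    refine ⟨(List.range k).map U, mul_mem hw hξmem, by simp, ?_⟩
    intro i hik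
    have hgetD : ((List.range k).map U).getD i 1 = U i := by
      rw [List.getD_eq_getElem _ _ (by simpa using hik)]
      simp
    have hUi : U i = (hui i hik).choose := by rw [hU]; simp [hik]
    rw [hgetD, hUi]
    obtain ⟨humem, hueq⟩ := (hui i hik).choose_spec
    exact ⟨humem, fun a hl hr => hueq a hl hr⟩

end SP

namespace SP

lemma shuffle_eq (ps : List ℕ) {x ξ ξ' : Equiv.Perm ℤ} (hx : x ∈ SignedPerm ps.sum)
    (hξmem : ξ ∈ SignedPerm ps.sum)
    (hξpos : ∀ a : ℤ, 1 ≤ a → a ≤ (ps.sum : ℤ) → 0 < ξ a)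
    (hξmono : ∀ i < ps.length, ∀ a b : ℤ, ((ps.take i).sum : ℤ) < a → a < b →
      b ≤ ((ps.take i).sum : ℤ) + (ps.getD i 0 : ℤ) → ξ a < ξ b)
    (hξrange : ∀ i < ps.length, ∀ a : ℤ, ((ps.take i).sum : ℤ) < a →
      a ≤ ((ps.take i).sum : ℤ) + (ps.getD i 0 : ℤ) →
      ((ps.take i).sum : ℤ) < |x (ξ a)| ∧ |x (ξ a)| ≤ ((ps.take i).sum : ℤ) + (ps.getD i 0 : ℤ))
    (hξmem' : ξ' ∈ SignedPerm ps.sum)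
    (hξpos' : ∀ a : ℤ, 1 ≤ a → a ≤ (ps.sum : ℤ) → 0 < ξ' a)
    (hξmono' : ∀ i < ps.length, ∀ a b : ℤ, ((ps.take i).sum : ℤ) < a → a < b →
      b ≤ ((ps.take i).sum : ℤ) + (ps.getD i 0 : ℤ) → ξ' a < ξ' b)
    (hξrange' : ∀ i < ps.length, ∀ a : ℤ, ((ps.take i).sum : ℤ) < a →
      a ≤ ((ps.take i).sum : ℤ) + (ps.getD i 0 : ℤ) →
      ((ps.take i).sum : ℤ) < |x (ξ' a)| ∧ |x (ξ' a)| ≤ ((ps.take i).sum : ℤ) + (ps.getD i 0 : ℤ)) :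
    ξ = ξ' := by
  classical
  set n := ps.sum with hn
  set k := ps.length with hk
  have hS0 : ∀ i : ℕ, (0:ℤ) ≤ ((ps.take i).sum : ℤ) := fun i => by positivity
  have hStop : ∀ i < k, ((ps.take i).sum : ℤ) + (ps.getD i 0 : ℤ) ≤ (n:ℤ) := by
    intro i hi
    have h1 := sum_take_succ ps i hi
    have h2 := take_sum_le ps (i+1)
    rw [hn]
    omega
  have key : ∀ i < k, ∀ a : ℤ, ((ps.take i).sum : ℤ) < a →
      a ≤ ((ps.take i).sum : ℤ) + (ps.getD i 0 : ℤ) → ξ a = ξ' a := by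
    intro i hik a hl hr
    set A : Finset ℤ :=
      (Finset.Icc (1:ℤ) (n:ℤ)).filter (fun j => ((ps.take i).sum : ℤ) < |x j| ∧
        |x j| ≤ ((ps.take i).sum : ℤ) + (ps.getD i 0 : ℤ)) with hA
    have hcard : A.card = ps.getD i 0 := by
      rw [hA, card_filter_abs hx _ _ (hS0 i) (hStop i hik)]
      simp
    have he : ∀ (ζ : Equiv.Perm ℤ),
        ζ ∈ SignedPerm n →
        (∀ a : ℤ, 1 ≤ a → a ≤ (n:ℤ) → 0 < ζ a) →
        (∀ a b : ℤ, ((ps.take i).sum : ℤ) < a → a < b →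
          b ≤ ((ps.take i).sum : ℤ) + (ps.getD i 0 : ℤ) → ζ a < ζ b) →
        (∀ a : ℤ, ((ps.take i).sum : ℤ) < a →
          a ≤ ((ps.take i).sum : ℤ) + (ps.getD i 0 : ℤ) →
          ((ps.take i).sum : ℤ) < |x (ζ a)| ∧
            |x (ζ a)| ≤ ((ps.take i).sum : ℤ) + (ps.getD i 0 : ℤ)) →
        (fun j : Fin (ps.getD i 0) => ζ (((ps.take i).sum : ℤ) + 1 + (j:ℕ))) =
          A.orderEmbOfFin hcard := by
      intro ζ hmem hpos hmono hrange
      apply Finset.orderEmbOfFin_unique hcard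
      · intro j
        have hj : (j:ℕ) < ps.getD i 0 := j.isLt
        have hl' : ((ps.take i).sum : ℤ) < ((ps.take i).sum : ℤ) + 1 + (j:ℕ) := by
          have : (0:ℤ) ≤ ((j:ℕ) : ℤ) := by positivity
          omega
        have hr' : ((ps.take i).sum : ℤ) + 1 + (j:ℕ) ≤
            ((ps.take i).sum : ℤ) + (ps.getD i 0 : ℤ) := by
          have : ((j:ℕ) : ℤ) < (ps.getD i 0 : ℤ) := by exact_mod_cast hj
          omega
        have h1 : (1:ℤ) ≤ ((ps.take i).sum : ℤ) + 1 + (j:ℕ) := by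
          have := hS0 i; omega
        have h2 : ((ps.take i).sum : ℤ) + 1 + (j:ℕ) ≤ (n:ℤ) := le_trans hr' (hStop i hik)
        have hp := hpos _ h1 h2
        have habs := abs_le hmem (a := ((ps.take i).sum : ℤ) + 1 + (j:ℕ))
          (by rw [abs_of_pos (by omega)]; omega)
        obtain ⟨hr1, hr2⟩ := hrange _ hl' hr'
        rw [hA]
        simp only [Finset.mem_filter, Finset.mem_Icc]
        refine ⟨⟨by omega, by rw [abs_of_pos hp] at habs; omega⟩, hr1, hr2⟩
      · intro j1 j2 hj
        apply hmono
        · have : (0:ℤ) ≤ ((j1:ℕ) : ℤ) := by positivity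
          omega
        · have : ((j1:ℕ) : ℤ) < ((j2:ℕ) : ℤ) := by exact_mod_cast hj
          omega
        · have : ((j2:ℕ) : ℤ) < (ps.getD i 0 : ℤ) := by exact_mod_cast j2.isLt
          omega
    have e1 := he ξ hξmem hξpos (hξmono i hik) (hξrange i hik)
    have e2 := he ξ' hξmem' hξpos' (hξmono' i hik) (hξrange' i hik)
    have he2 : (fun j : Fin (ps.getD i 0) => ξ (((ps.take i).sum : ℤ) + 1 + (j:ℕ))) =
        (fun j : Fin (ps.getD i 0) => ξ' (((ps.take i).sum : ℤ) + 1 + (j:ℕ))) := by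
      rw [e1, e2]
    have hj : (a - ((ps.take i).sum : ℤ) - 1).toNat < ps.getD i 0 := by omega
    have := congrFun he2 ⟨(a - ((ps.take i).sum : ℤ) - 1).toNat, hj⟩
    simp only at this
    have haeq : ((ps.take i).sum : ℤ) + 1 + ((a - ((ps.take i).sum : ℤ) - 1).toNat : ℤ) = a := by
      omega
    rwa [haeq] at this
  have hpos : ∀ a : ℤ, 1 ≤ a → a ≤ (n:ℤ) → ξ a = ξ' a := by
    intro a h1 h2
    obtain ⟨i, hik, hl, hr⟩ := block_exists ps a h1 h2
    exact key i hik a hl hr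
  apply Equiv.ext
  intro a
  rcases lt_trichotomy a 0 with h | h | h
  · by_cases hn' : -a ≤ (n:ℤ)
    · have := hpos (-a) (by omega) hn'
      have e1 : ξ (-(-a)) = -ξ (-a) := hξmem.1 (-a)
      have e2 : ξ' (-(-a)) = -ξ' (-a) := hξmem'.1 (-a)
      rw [neg_neg] at e1 e2
      rw [e1, e2, this]
    · rw [hξmem.2 a (by rw [abs_of_neg h]; omega), hξmem'.2 a (by rw [abs_of_neg h]; omega)]
  · rw [h, map_zero hξmem, map_zero hξmem']
  · by_cases hn' : a ≤ (n:ℤ)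
    · exact hpos a (by omega) hn'
    · rw [hξmem.2 a (by rw [abs_of_pos h]; omega), hξmem'.2 a (by rw [abs_of_pos h]; omega)]

end SP


/-- range of values of a multi shifted product on a block. -/
lemma SP.multiSProd_range {ps : List ℕ} {us : List (Equiv.Perm ℤ)} {w : Equiv.Perm ℤ}
    (h : IsMultiSProd ps us w) :
    ∀ i < ps.length, ∀ a : ℤ, ((ps.take i).sum : ℤ) < a →
      a ≤ ((ps.take i).sum : ℤ) + (ps.getD i 0 : ℤ) →
      ((ps.take i).sum : ℤ) < |w a| ∧
        |w a| ≤ ((ps.take i).sum : ℤ) + (ps.getD i 0 : ℤ) := by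
  intro i hik a hl hr
  obtain ⟨humem, heq⟩ := h.2.2 i hik
  rw [heq a hl hr]
  have hb1 : (1:ℤ) ≤ a - ((ps.take i).sum : ℤ) := by omega
  have hb2 : a - ((ps.take i).sum : ℤ) ≤ (ps.getD i 0 : ℤ) := by omega
  obtain ⟨hu1, hu2⟩ := SP.abs_pos_of humem hb1 hb2
  have hne : (us.getD i 1) (a - ((ps.take i).sum : ℤ)) ≠ 0 := by
    intro hc; rw [hc] at hu1; simp at hu1
  rw [SP.abs_shiftFun _ _ hne]
  omega

lemma SP.multiSProd_neg_iff {ps : List ℕ} {us : List (Equiv.Perm ℤ)} {w : Equiv.Perm ℤ}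
    (h : IsMultiSProd ps us w) {i : ℕ} (hik : i < ps.length) {b : ℤ}
    (hb1 : 1 ≤ b) (hb2 : b ≤ (ps.getD i 0 : ℤ)) :
    ((us.getD i 1) b < 0 ↔ w (b + ((ps.take i).sum : ℤ)) < 0) := by
  obtain ⟨humem, heq⟩ := h.2.2 i hik
  have hl : ((ps.take i).sum : ℤ) < b + ((ps.take i).sum : ℤ) := by omega
  have hr : b + ((ps.take i).sum : ℤ) ≤ ((ps.take i).sum : ℤ) + (ps.getD i 0 : ℤ) := by omega
  rw [heq _ hl hr]
  have hsimp : b + ((ps.take i).sum : ℤ) - ((ps.take i).sum : ℤ) = b := by ring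
  rw [hsimp]
  have hne : (us.getD i 1) b ≠ 0 := SP.apply_ne_zero humem (by omega)
  exact (SP.shiftFun_neg_iff _ _ hne).symm

lemma SP.nega_det {ps : List ℕ} {us us' : List (Equiv.Perm ℤ)} {w : Equiv.Perm ℤ}
    (h : IsMultiSProd ps us w) (h' : IsMultiSProd ps us' w) {i : ℕ} (hik : i < ps.length) :
    NegaSet (ps.getD i 0) (us.getD i 1) = NegaSet (ps.getD i 0) (us'.getD i 1) := by
  unfold NegaSet
  ext b
  simp only [Finset.mem_filter, Finset.mem_Icc]
  constructor
  · rintro ⟨⟨h1, h2⟩, h3⟩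
    exact ⟨⟨h1, h2⟩, (SP.multiSProd_neg_iff h' hik h1 h2).mpr
      ((SP.multiSProd_neg_iff h hik h1 h2).mp h3)⟩
  · rintro ⟨⟨h1, h2⟩, h3⟩
    exact ⟨⟨h1, h2⟩, (SP.multiSProd_neg_iff h hik h1 h2).mpr
      ((SP.multiSProd_neg_iff h' hik h1 h2).mp h3)⟩

lemma SP.comp_exists {ps : List ℕ} {w : Equiv.Perm ℤ} (h : w ∈ MultiProdSet ps) :
    ∃ Ls, ValidLs ps Ls ∧ w ∈ ComponentSet ps Ls := by
  obtain ⟨us, hus⟩ := h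
  refine ⟨(List.range (ps.length - 1)).map
    (fun j => NegaSet (ps.getD (j+1) 0) (us.getD (j+1) 1)), ⟨by simp, ?_⟩, us, hus, ?_⟩
  · intro i hi
    rw [List.getD_eq_getElem _ _ (by simpa using hi)]
    simp only [List.getElem_map, List.getElem_range]
    unfold NegaSet
    exact Finset.filter_subset _ _
  · intro i h1 hi
    have : i - 1 < ((List.range (ps.length - 1)).map
        (fun j => NegaSet (ps.getD (j+1) 0) (us.getD (j+1) 1))).length := by
      rw [List.length_map, List.length_range]; omega
    rw [List.getD_eq_getElem _ _ this]
    simp only [List.getElem_map, List.getElem_range]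
    rw [show i - 1 + 1 = i by omega]

lemma SP.comp_eq_of_mem {ps : List ℕ} {Ls Ls' : List (Finset ℤ)} {w : Equiv.Perm ℤ}
    (hLs : ValidLs ps Ls) (hLs' : ValidLs ps Ls')
    (hw : w ∈ ComponentSet ps Ls) (hw' : w ∈ ComponentSet ps Ls') : Ls = Ls' := by
  obtain ⟨us, hus, hNs⟩ := hw
  obtain ⟨us', hus', hNs'⟩ := hw'
  apply List.ext_getElem (by rw [hLs.1, hLs'.1])
  intro j hj hj'
  have hj1 : j < ps.length - 1 := by rw [hLs.1] at hj; exact hj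
  have a1 := hNs (j+1) (by omega) (by omega)
  have a2 := hNs' (j+1) (by omega) (by omega)
  simp only [Nat.add_sub_cancel] at a1 a2
  have hdet := SP.nega_det hus hus' (i := j+1) (by omega)
  rw [← List.getD_eq_getElem Ls ∅ hj, ← List.getD_eq_getElem Ls' ∅ hj', ← a1, ← a2, hdet]


/-- `𝔅_{p₁} × ⋯ × 𝔅_{p_k}` is the disjoint union of its components
`𝔅_{p₁} × 𝔅_{p₂,L₂} × ⋯ × 𝔅_{p_k,L_k}` over all tuples `(L₂,…,L_k)` with `L_i ⊆ [p_i]`;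
moreover `𝔅_n` is the disjoint union of the translates of these components by the
inverses of the shuffles `ξ ∈ Sh(p₁,…,p_k)`. -/
theorem multiprod_disjoint_union (ps : List ℕ) (hk : 2 ≤ ps.length)
    (hpos : ∀ x ∈ ps, 0 < x) :
    (MultiProdSet ps =
      ⋃ (Ls : List (Finset ℤ)) (_ : ValidLs ps Ls), ComponentSet ps Ls) ∧
    (∀ Ls Ls' : List (Finset ℤ), ValidLs ps Ls → ValidLs ps Ls' → Ls ≠ Ls' →
      Disjoint (ComponentSet ps Ls) (ComponentSet ps Ls')) ∧
    (SignedPerm ps.sum =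
      ⋃ (ξ : Equiv.Perm ℤ) (_ : IsMultiShuffle ps ξ)
        (Ls : List (Finset ℤ)) (_ : ValidLs ps Ls),
          (fun w => w * ξ⁻¹) '' ComponentSet ps Ls) ∧
    (∀ ξ ξ' : Equiv.Perm ℤ, ∀ Ls Ls' : List (Finset ℤ),
      IsMultiShuffle ps ξ → IsMultiShuffle ps ξ' → ValidLs ps Ls → ValidLs ps Ls' →
      (ξ, Ls) ≠ (ξ', Ls') →
      Disjoint ((fun w => w * ξ⁻¹) '' ComponentSet ps Ls)
        ((fun w => w * ξ'⁻¹) '' ComponentSet ps Ls')) := by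
  refine ⟨?_, ?_, ?_, ?_⟩
  · -- first decomposition
    ext w
    simp only [Set.mem_iUnion]
    constructor
    · intro hw
      obtain ⟨Ls, h1, h2⟩ := SP.comp_exists hw
      exact ⟨Ls, h1, h2⟩
    · rintro ⟨Ls, _, us, hus, _⟩
      exact ⟨us, hus⟩
  · -- disjointness of components
    intro Ls Ls' h1 h2 hne
    rw [Set.disjoint_left]
    intro w hw hw'
    exact hne (SP.comp_eq_of_mem h1 h2 hw hw')
  · -- second decomposition
    ext w
    simp only [Set.mem_iUnion, Set.mem_image]
    constructor
    · intro hw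
      obtain ⟨ξ, hξ, us, hv⟩ := SP.exists_decomp ps hpos hw
      have hvm : (w * ξ) ∈ MultiProdSet ps := ⟨us, hv.1, hv.2.1, hv.2.2⟩
      obtain ⟨Ls, hLs, hcomp⟩ := SP.comp_exists hvm
      refine ⟨ξ, ⟨hξ.1, hξ.2.1, hξ.2.2⟩, Ls, hLs, w * ξ, hcomp, ?_⟩
      simp [mul_assoc]
    · rintro ⟨ξ, hξ, Ls, hLs, v, hv, rfl⟩
      obtain ⟨us, hus, -⟩ := hv
      exact SP.mul_mem hus.1 (SP.inv_mem hξ.1)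
  · -- disjointness of translates
    intro ξ ξ' Ls Ls' hξ hξ' hLs hLs' hne
    rw [Set.disjoint_left]
    rintro x ⟨v, hv, hxv⟩ ⟨v', hv', hxv'⟩
    apply hne
    have hv2 := hv
    have hv2' := hv'
    obtain ⟨us, hus, -⟩ := hv2
    obtain ⟨us', hus', -⟩ := hv2'
    have hx : x ∈ SignedPerm ps.sum := by
      rw [← hxv]
      exact SP.mul_mem hus.1 (SP.inv_mem hξ.1)
    have hvx : v = x * ξ := by rw [← hxv]; simp [mul_assoc]
    have hvx' : v' = x * ξ' := by rw [← hxv']; simp [mul_assoc]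
    have hrange : ∀ i < ps.length, ∀ a : ℤ, ((ps.take i).sum : ℤ) < a →
        a ≤ ((ps.take i).sum : ℤ) + (ps.getD i 0 : ℤ) →
        ((ps.take i).sum : ℤ) < |x (ξ a)| ∧
          |x (ξ a)| ≤ ((ps.take i).sum : ℤ) + (ps.getD i 0 : ℤ) := by
      intro i hik a hl hr
      have : x (ξ a) = v a := by rw [hvx]; rfl
      rw [this]
      exact SP.multiSProd_range hus i hik a hl hr
    have hrange' : ∀ i < ps.length, ∀ a : ℤ, ((ps.take i).sum : ℤ) < a →
        a ≤ ((ps.take i).sum : ℤ) + (ps.getD i 0 : ℤ) →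
        ((ps.take i).sum : ℤ) < |x (ξ' a)| ∧
          |x (ξ' a)| ≤ ((ps.take i).sum : ℤ) + (ps.getD i 0 : ℤ) := by
      intro i hik a hl hr
      have : x (ξ' a) = v' a := by rw [hvx']; rfl
      rw [this]
      exact SP.multiSProd_range hus' i hik a hl hr
    have hξeq : ξ = ξ' :=
      SP.shuffle_eq ps hx hξ.1 hξ.2.1 hξ.2.2 hrange hξ'.1 hξ'.2.1 hξ'.2.2 hrange'
    have hveq : v = v' := by rw [hvx, hvx', hξeq]
    have hLseq : Ls = Ls' := SP.comp_eq_of_mem hLs hLs' hv (hveq ▸ hv')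
    rw [hξeq, hLseq]
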